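/- Let X be a compact metrizable space with compatible metric ρ, let 𝒰 be a finite open cover of X, and let (f_U)_{U∈𝒰} be a family of Lipschitz (with respect to ρ) functions f_U : X → [0,1] such that max_{U∈𝒰} f_U(x) = 1 for all x ∈ X and f_U(x) = 0 for x ∈ X \ U. Let (d_i)_{i≥1} be a sequence of positive integers tending to infinity, and define Ψ_i : X^{d_i} → [0,1]^{{1,…,d_i}×𝒰} by Ψ_i(x)(j,U) = f_U(x(j)). Then for every α > 0 and η > 0 there exists ε₀ > 0 with the following property: whenever 0 < ε < ε₀ and Ξ_i ⊆ X^{d_i} (for i ≥ 1) satisfy limsup_{i→∞} log S_ε(Ξ_i, ρ_1)/(d_i log(1/ε)) ≤ α, then for all sufficiently large i there exists ξ ∈ (0,1)^{{1,…,d_i}×𝒰} such that for every subset S ⊆ {1,…,d_i}×𝒰 with |S| ≥ (α+η)·d_i, the restriction ξ|_S does not belong to {Ψ_i(x)|_S : x ∈ Ξ_i}. -/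

import Mathlib

open Filter Topology
open scoped ENNReal

/-- A sofic approximation of a group `Γ`. -/
structure SoficApprox (Γ : Type*) [Group Γ] where
  d : ℕ → ℕ
  σ : ∀ i, Γ → Equiv.Perm (Fin (d i))
  tendsto_d : Filter.Tendsto d Filter.atTop Filter.atTop
  mul_approx : ∀ g h : Γ, Filter.Tendsto
    (fun i => (((Finset.univ.filter fun k : Fin (d i) =>
        σ i g (σ i h k) = σ i (g * h) k).card : ℝ) / (d i : ℝ)))
    Filter.atTop (nhds 1)
  sep_approx : ∀ g h : Γ, g ≠ h → Filter.Tendsto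
    (fun i => (((Finset.univ.filter fun k : Fin (d i) =>
        σ i g k ≠ σ i h k).card : ℝ) / (d i : ℝ)))
    Filter.atTop (nhds 1)

/-- A continuous pseudometric on a topological space. -/
structure IsContPseudoMetric {X : Type*} [TopologicalSpace X] (ρ : X → X → ℝ) : Prop where
  refl : ∀ x, ρ x x = 0
  symm : ∀ x y, ρ x y = ρ y x
  triangle : ∀ x y z, ρ x z ≤ ρ x y + ρ y z
  continuous : Continuous fun q : X × X => ρ q.1 q.2

/-- A dynamically generating continuous pseudometric for the action of `Γ` on `X`. -/
def IsDynGen (Γ : Type*) {X : Type*} [Group Γ] [MulAction Γ X] [TopologicalSpace X]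
    (ρ : X → X → ℝ) : Prop :=
  IsContPseudoMetric ρ ∧ ∀ x y : X, x ≠ y → ∃ g : Γ, 0 < ρ (g • x) (g • y)

/-- `S_ε(A, ρ)`: the smallest cardinality of an `ε`-dense subset of `A` w.r.t. `ρ`. -/
noncomputable def covNum {Z : Type*} (ρ : Z → Z → ℝ) (A : Set Z) (ε : ℝ) : ℕ :=
  sInf {n : ℕ | ∃ D : Finset Z, ↑D ⊆ A ∧ D.card = n ∧ ∀ a ∈ A, ∃ z ∈ D, ρ a z ≤ ε}

/-- `log n` as an extended real, with `log 0 = -∞`. -/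
noncomputable def elog (n : ℕ) : EReal := if n = 0 then ⊥ else ((Real.log n : ℝ) : EReal)

/-- The `ℓ^p`-product pseudometric `ρ_p` on `X^k` (normalized), with `p = ∞` giving the max. -/
noncomputable def pPM {Z : Type*} (ρ : Z → Z → ℝ) (p : ℝ≥0∞) {k : ℕ}
    (x y : Fin k → Z) : ℝ :=
  if p = ⊤ then ⨆ j, ρ (x j) (y j)
  else ((k : ℝ)⁻¹ * ∑ j, ρ (x j) (y j) ^ p.toReal) ^ (p.toReal)⁻¹

/-- The space `Map(ρ, F, δ, σ)` of `(F,δ)`-almost equivariant microstates. -/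
def MapSp {Γ X : Type*} [Group Γ] [MulAction Γ X] (ρ : X → X → ℝ) (F : Finset Γ) (δ : ℝ)
    {d : ℕ} (σ : Γ → Equiv.Perm (Fin d)) : Set (Fin d → X) :=
  {φ | ∀ g ∈ F, pPM ρ 2 (fun j => φ (σ g j)) (fun j => g • φ j) < δ}

/-- `mdim_{Σ,p}(X, ρ)`, the `p`-metric mean dimension with respect to the pseudometric `ρ`. -/
noncomputable def mdimP {Γ X : Type*} [Group Γ] [MulAction Γ X]
    (S : SoficApprox Γ) (ρ : X → X → ℝ) (p : ℝ≥0∞) : EReal :=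
  Filter.liminf (fun ε : ℝ =>
    ⨅ (F : Finset Γ) (δ : ℝ) (_ : 0 < δ),
      Filter.limsup (fun i =>
        elog (covNum (fun x y => pPM ρ p x y) (MapSp ρ F δ (S.σ i)) ε)
          * ((((S.d i : ℝ) * Real.log ε⁻¹)⁻¹ : ℝ) : EReal))
        Filter.atTop)
    (𝓝[>] (0 : ℝ))

/-- `mdim_{Σ,M,p}(X, Γ)`, the sofic `p`-metric mean dimension. -/
noncomputable def mdimMP (Γ X : Type*) [Group Γ] [MulAction Γ X] [TopologicalSpace X]
    (S : SoficApprox Γ) (p : ℝ≥0∞) : EReal :=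
  ⨅ (ρ : X → X → ℝ) (_ : IsDynGen Γ ρ), mdimP S ρ p

/-- A compatible metric on a topological space: a metric whose metric topology is the given
topology. -/
structure IsCompatMetric {X : Type*} [TopologicalSpace X] (ρ : X → X → ℝ) : Prop where
  refl : ∀ x, ρ x x = 0
  eq_of_eq_zero : ∀ x y, ρ x y = 0 → x = y
  symm : ∀ x y, ρ x y = ρ y x
  triangle : ∀ x y z, ρ x z ≤ ρ x y + ρ y z
  isOpen_iff : ∀ s : Set X, IsOpen s ↔ ∀ x ∈ s, ∃ ε > 0, ∀ y, ρ x y < ε → y ∈ s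

lemma pPM_one' {Z : Type*} (ρ : Z → Z → ℝ) {k : ℕ} (x y : Fin k → Z) :
    pPM ρ 1 x y = (k : ℝ)⁻¹ * ∑ j, ρ (x j) (y j) := by
  simp [pPM, ENNReal.toReal_one, Real.rpow_one]


lemma nat_choose_le_two_pow (n m : ℕ) : n.choose m ≤ 2 ^ n := by
  rcases le_or_gt m n with h | h
  · calc n.choose m ≤ ∑ i ∈ Finset.range (n+1), n.choose i :=
        Finset.single_le_sum (fun i _ => Nat.zero_le _) (Finset.mem_range.mpr (Nat.lt_succ_of_le h))
    _ = 2 ^ n := Nat.sum_range_choose n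
  · simp [Nat.choose_eq_zero_of_lt h]


lemma exists_grid (N : ℕ) (hN : 0 < N) :
    ∃ T : Finset ℝ, T.card = N ∧ (∀ t ∈ T, t ∈ Set.Ioo (0:ℝ) 1) ∧
      ∀ (a r : ℝ), 2 * r < (N : ℝ)⁻¹ →
        ∀ t ∈ T, ∀ t' ∈ T, |t - a| ≤ r → |t' - a| ≤ r → t = t' := by
  have hN' : (0:ℝ) < N := by exact_mod_cast hN
  refine ⟨(Finset.range N).image (fun i : ℕ => ((i:ℝ) + 1/2)/(N:ℝ)), ?_, ?_, ?_⟩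
  · rw [Finset.card_image_of_injective _ ?_, Finset.card_range]
    intro i j hij
    field_simp at hij
    exact_mod_cast (by linarith : (i:ℝ) = j)
  · rintro t ht
    simp only [Finset.mem_image, Finset.mem_range] at ht
    obtain ⟨i, hi, rfl⟩ := ht
    have h1 : (i:ℝ) + 1 ≤ N := by exact_mod_cast Nat.succ_le_of_lt hi
    constructor
    · positivity
    · rw [div_lt_one hN']
      linarith
  · rintro a r hr t ht t' ht' h1 h2
    simp only [Finset.mem_image, Finset.mem_range] at ht ht'
    obtain ⟨i, hi, rfl⟩ := ht
    obtain ⟨j, hj, rfl⟩ := ht'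
    by_contra hne
    have hij : i ≠ j := by rintro rfl; exact hne rfl
    have h3 : (1:ℝ) ≤ |(i:ℝ) - (j:ℝ)| := by
      rcases Nat.lt_or_ge i j with h | h
      · have h' : (i:ℝ) + 1 ≤ j := by exact_mod_cast h
        rw [abs_sub_comm, abs_of_nonneg (by linarith)]
        linarith
      · have h'' : j < i := lt_of_le_of_ne h (Ne.symm hij)
        have h' : (j:ℝ) + 1 ≤ i := by exact_mod_cast h''
        rw [abs_of_nonneg (by linarith)]
        linarith
    have h4 : |((i:ℝ) + 1/2)/N - ((j:ℝ) + 1/2)/N| ≤ 2*r := by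
      calc |((i:ℝ) + 1/2)/N - ((j:ℝ) + 1/2)/N|
          ≤ |((i:ℝ) + 1/2)/N - a| + |a - ((j:ℝ) + 1/2)/N| := abs_sub_le _ _ _
        _ ≤ r + r := by rw [abs_sub_comm a]; exact add_le_add h1 h2
        _ = 2*r := by ring
    have h5 : |((i:ℝ) + 1/2)/N - ((j:ℝ) + 1/2)/N| = |(i:ℝ) - j| / N := by
      rw [div_sub_div_same]
      rw [abs_div, abs_of_pos hN']
      congr 2
      ring
    rw [h5] at h4
    have h6 : (N:ℝ)⁻¹ ≤ |(i:ℝ) - j| / N := by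
      rw [div_eq_mul_inv]
      calc (N:ℝ)⁻¹ = 1 * (N:ℝ)⁻¹ := (one_mul _).symm
        _ ≤ |(i:ℝ) - j| * (N:ℝ)⁻¹ := mul_le_mul_of_nonneg_right h3 (by positivity)
    linarith

lemma compat_nonneg {X : Type*} [TopologicalSpace X] {ρ : X → X → ℝ}
    (hρ : IsCompatMetric ρ) (x y : X) : 0 ≤ ρ x y := by
  have h1 := hρ.triangle x y x
  rw [hρ.refl, hρ.symm y x] at h1
  linarith


lemma exists_net {X : Type*} [TopologicalSpace X] [CompactSpace X]
    {ρ : X → X → ℝ} (hρ : IsCompatMetric ρ) {ε : ℝ} (hε : 0 < ε) (k : ℕ)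
    (A : Set (Fin k → X)) :
    ∃ D : Finset (Fin k → X), ↑D ⊆ A ∧ ∀ a ∈ A, ∃ z ∈ D, pPM ρ 1 a z ≤ ε := by
  classical
  rcases A.eq_empty_or_nonempty with h | ⟨a₀, ha₀⟩
  · refine ⟨∅, by simp, by simp [h]⟩
  have hball : ∀ y : X, IsOpen {x | ρ y x < ε/2} := by
    intro y
    rw [hρ.isOpen_iff]
    intro x hx
    refine ⟨ε/2 - ρ y x, by simpa using hx, fun z hz => ?_⟩
    have := hρ.triangle y x z
    simp only [Set.mem_setOf_eq] at hx ⊢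
    linarith
  obtain ⟨t, htc⟩ := isCompact_univ.elim_finite_subcover (fun y : X => {x | ρ y x < ε/2})
    hball (fun x _ => Set.mem_iUnion.mpr ⟨x, by simp [hρ.refl, hε]⟩)
  have ht' : ∀ x : X, ∃ y ∈ t, ρ y x < ε/2 := by
    intro x
    have := htc (Set.mem_univ x)
    simpa using this
  let P : (Fin k → ↥t) → Prop := fun g => ∃ a ∈ A, ∀ j, ρ ((g j) : X) (a j) < ε/2
  let pick : (Fin k → ↥t) → (Fin k → X) := fun g =>
    if h : P g then h.choose else a₀
  have hpickA : ∀ g, pick g ∈ A := by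
    intro g
    by_cases h : P g
    · simp only [pick, dif_pos h]
      exact h.choose_spec.1
    · simp only [pick, dif_neg h]
      exact ha₀
  refine ⟨Finset.image pick Finset.univ, ?_, ?_⟩
  · intro b hb
    simp only [Finset.coe_image, Set.mem_image] at hb
    obtain ⟨g, _, rfl⟩ := hb
    exact hpickA g
  · intro a ha
    have hg : ∀ j : Fin k, ∃ y ∈ t, ρ y (a j) < ε/2 := fun j => ht' (a j)
    choose y hy hylt using hg
    let g : Fin k → ↥t := fun j => ⟨y j, hy j⟩
    have hPg : P g := ⟨a, ha, fun j => hylt j⟩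
    refine ⟨pick g, Finset.mem_image.mpr ⟨g, Finset.mem_univ _, rfl⟩, ?_⟩
    have hspec := (dif_pos hPg : pick g = hPg.choose) ▸ hPg.choose_spec
    obtain ⟨-, hspec2⟩ := hspec
    rw [pPM_one']
    have hsum : ∑ j, ρ (a j) (pick g j) ≤ ∑ _j : Fin k, ε := by
      refine Finset.sum_le_sum fun j _ => ?_
      have h1 := hρ.triangle (a j) ((g j : X)) (pick g j)
      have h2 : ρ (a j) ((g j : X)) < ε/2 := by rw [hρ.symm]; exact hylt j
      have h3 := hspec2 j
      linarith
    have : ∑ _j : Fin k, ε = (k:ℝ) * ε := by simp [mul_comm]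
    rw [this] at hsum
    rcases Nat.eq_zero_or_pos k with hk | hk
    · subst hk
      simp [le_of_lt hε]
    · have hk' : (0:ℝ) < k := by exact_mod_cast hk
      calc (k:ℝ)⁻¹ * ∑ j, ρ (a j) (pick g j) ≤ (k:ℝ)⁻¹ * ((k:ℝ) * ε) := by
            apply mul_le_mul_of_nonneg_left hsum (by positivity)
        _ = ε := by field_simp

lemma exists_good_point {Z : Type*} [Fintype Z] [DecidableEq Z] (T : Finset ℝ) (r : ℝ)
    (hsep : ∀ a : ℝ, ∀ t ∈ T, ∀ t' ∈ T, |t - a| ≤ r → |t' - a| ≤ r → t = t')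
    (W : Finset (Z → ℝ)) (m : ℕ)
    (hlt : W.card * (Fintype.card Z).choose m * T.card ^ (Fintype.card Z - m)
        < T.card ^ Fintype.card Z) :
    ∃ ξ : Z → ℝ, (∀ z, ξ z ∈ T) ∧
      ∀ w ∈ W, (Finset.univ.filter fun z => |ξ z - w z| ≤ r).card < m := by
  classical
  set G := Fintype.piFinset (fun _ : Z => T) with hG
  have hGcard : G.card = T.card ^ Fintype.card Z := by
    rw [hG, Fintype.card_piFinset]
    simp
  set Bad := G.filter
    (fun ξ => ∃ w ∈ W, m ≤ (Finset.univ.filter fun z => |ξ z - w z| ≤ r).card) with hBad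
  -- per (w, S) bound
  have hperS : ∀ w : Z → ℝ, ∀ S : Finset Z, S.card = m →
      (G.filter fun ξ => ∀ z ∈ S, |ξ z - w z| ≤ r).card ≤ T.card ^ (Fintype.card Z - m) := by
    intro w S hScard
    have heq : G.filter (fun ξ => ∀ z ∈ S, |ξ z - w z| ≤ r)
        = Fintype.piFinset (fun z => if z ∈ S then T.filter (fun t => |t - w z| ≤ r) else T) := by
      ext ξ
      simp only [Finset.mem_filter, hG, Fintype.mem_piFinset]
      constructor
      · rintro ⟨h1, h2⟩ z
        by_cases hz : z ∈ S
        · simp only [if_pos hz, Finset.mem_filter]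
          exact ⟨h1 z, h2 z hz⟩
        · simp only [if_neg hz]
          exact h1 z
      · intro h
        constructor
        · intro z
          have := h z
          by_cases hz : z ∈ S
          · rw [if_pos hz, Finset.mem_filter] at this
            exact this.1
          · rwa [if_neg hz] at this
        · intro z hz
          have := h z
          rw [if_pos hz, Finset.mem_filter] at this
          exact this.2
    rw [heq, Fintype.card_piFinset]
    calc (∏ z, (if z ∈ S then T.filter (fun t => |t - w z| ≤ r) else T).card)
        ≤ ∏ z, (if z ∈ S then 1 else T.card) := by
          apply Finset.prod_le_prod'
          intro z _
          by_cases hz : z ∈ S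
          · simp only [if_pos hz]
            exact Finset.card_le_one.mpr (fun t ht t' ht' => by
              rw [Finset.mem_filter] at ht ht'
              exact hsep (w z) t ht.1 t' ht'.1 ht.2 ht'.2)
          · simp [if_neg hz]
      _ = T.card ^ (Fintype.card Z - m) := by
          rw [← Finset.prod_mul_prod_compl S]
          rw [Finset.prod_congr rfl (fun z hz => if_pos hz),
            Finset.prod_congr rfl (fun z hz => if_neg (Finset.mem_compl.mp hz))]
          simp [Finset.card_compl, hScard]
  have hperw : ∀ w : Z → ℝ,
      (G.filter fun ξ => m ≤ (Finset.univ.filter fun z => |ξ z - w z| ≤ r).card).card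
        ≤ (Fintype.card Z).choose m * T.card ^ (Fintype.card Z - m) := by
    intro w
    have hsub : (G.filter fun ξ => m ≤ (Finset.univ.filter fun z => |ξ z - w z| ≤ r).card)
        ⊆ (Finset.univ.powersetCard m).biUnion
            (fun S => G.filter fun ξ => ∀ z ∈ S, |ξ z - w z| ≤ r) := by
      intro ξ hξ
      rw [Finset.mem_filter] at hξ
      obtain ⟨hξG, hm⟩ := hξ
      obtain ⟨S, hSsub, hScard⟩ := Finset.exists_subset_card_eq hm
      refine Finset.mem_biUnion.mpr ⟨S, Finset.mem_powersetCard.mpr ⟨Finset.subset_univ _, hScard⟩,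
        Finset.mem_filter.mpr ⟨hξG, fun z hz => ?_⟩⟩
      have := hSsub hz
      rw [Finset.mem_filter] at this
      exact this.2
    calc _ ≤ ((Finset.univ.powersetCard m).biUnion
            (fun S => G.filter fun ξ => ∀ z ∈ S, |ξ z - w z| ≤ r)).card :=
          Finset.card_le_card hsub
      _ ≤ ∑ S ∈ Finset.univ.powersetCard m,
            (G.filter fun ξ => ∀ z ∈ S, |ξ z - w z| ≤ r).card := Finset.card_biUnion_le
      _ ≤ ∑ S ∈ Finset.univ.powersetCard m, T.card ^ (Fintype.card Z - m) := by
          refine Finset.sum_le_sum fun S hS => hperS w S (Finset.mem_powersetCard.mp hS).2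
      _ = (Fintype.card Z).choose m * T.card ^ (Fintype.card Z - m) := by
          rw [Finset.sum_const, Finset.card_powersetCard, Finset.card_univ, smul_eq_mul]
  have hBadcard : Bad.card < G.card := by
    have hsub : Bad ⊆ W.biUnion
        (fun w => G.filter fun ξ => m ≤ (Finset.univ.filter fun z => |ξ z - w z| ≤ r).card) := by
      intro ξ hξ
      rw [hBad, Finset.mem_filter] at hξ
      obtain ⟨hξG, w, hw, hm⟩ := hξ
      exact Finset.mem_biUnion.mpr ⟨w, hw, Finset.mem_filter.mpr ⟨hξG, hm⟩⟩
    calc Bad.card ≤ _ := Finset.card_le_card hsub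
      _ ≤ ∑ w ∈ W, (G.filter fun ξ =>
            m ≤ (Finset.univ.filter fun z => |ξ z - w z| ≤ r).card).card := Finset.card_biUnion_le
      _ ≤ ∑ _w ∈ W, (Fintype.card Z).choose m * T.card ^ (Fintype.card Z - m) :=
          Finset.sum_le_sum fun w _ => hperw w
      _ = W.card * (Fintype.card Z).choose m * T.card ^ (Fintype.card Z - m) := by
          rw [Finset.sum_const, smul_eq_mul, mul_assoc]
      _ < T.card ^ Fintype.card Z := hlt
      _ = G.card := hGcard.symm
  have : ∃ ξ ∈ G, ξ ∉ Bad := by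
    by_contra h
    push_neg at h
    exact absurd (Finset.card_le_card h) (not_le.mpr hBadcard)
  obtain ⟨ξ, hξG, hξBad⟩ := this
  refine ⟨ξ, fun z => (Fintype.mem_piFinset.mp hξG) z, ?_⟩
  intro w hw
  by_contra h
  push_neg at h
  exact hξBad (Finset.mem_filter.mpr ⟨hξG, w, hw, h⟩)

set_option maxHeartbeats 2000000 in
/-- given a finite open cover `𝒰` of a compact metrizable space `X` with a
subordinate family of Lipschitz functions `(f_U)` whose pointwise max is `1`, and a sequence
`d_i → ∞`, for every `α, η > 0` there is `ε₀ > 0` such that: whenever `0 < ε < ε₀` and sets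
`Ξ_i ⊆ X^{d_i}` have `limsup_i log S_ε(Ξ_i,ρ_1)/(d_i log(1/ε)) ≤ α`, then for all large `i`
some `ξ ∈ (0,1)^{{1,…,d_i}×𝒰}` avoids `Ψ_i(Ξ_i)|_S` for every `S` with `|S| ≥ (α+η)d_i`,
where `Ψ_i(x)(j,U) = f_U(x(j))`. -/
theorem stmt4 {X : Type*} [TopologicalSpace X] [CompactSpace X]
    [TopologicalSpace.MetrizableSpace X]
    (ρ : X → X → ℝ) (hρ : IsCompatMetric ρ)
    (U : Finset (Set X)) (hUopen : ∀ u ∈ U, IsOpen u) (hUcover : ∀ x : X, ∃ u ∈ U, x ∈ u)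
    (f : ↥U → X → ℝ)
    (hf01 : ∀ u x, f u x ∈ Set.Icc (0 : ℝ) 1)
    (hfLip : ∀ u : ↥U, ∃ L : ℝ, ∀ x y, |f u x - f u y| ≤ L * ρ x y)
    (hfmax : ∀ x : X, ∃ u : ↥U, f u x = 1)
    (hfzero : ∀ (u : ↥U) (x : X), x ∉ (u : Set X) → f u x = 0)
    (d : ℕ → ℕ) (hdpos : ∀ i, 0 < d i) (hd : Filter.Tendsto d Filter.atTop Filter.atTop)
    (α η : ℝ) (hα : 0 < α) (hη : 0 < η) :
    ∃ ε₀ > (0 : ℝ), ∀ ε : ℝ, 0 < ε → ε < ε₀ →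
      ∀ Ξ : (i : ℕ) → Set (Fin (d i) → X),
        Filter.limsup (fun i =>
            elog (covNum (fun x y => pPM ρ 1 x y) (Ξ i) ε)
              * ((((d i : ℝ) * Real.log ε⁻¹)⁻¹ : ℝ) : EReal)) Filter.atTop ≤ ((α : ℝ) : EReal) →
        ∀ᶠ i in Filter.atTop, ∃ ξ : Fin (d i) × ↥U → ℝ,
          (∀ z, ξ z ∈ Set.Ioo (0 : ℝ) 1) ∧
          ∀ S : Finset (Fin (d i) × ↥U), (α + η) * d i ≤ S.card →
            ¬ ∃ x ∈ Ξ i, ∀ z ∈ S, f z.2 (x z.1) = ξ z := by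
  classical
  by_cases hX : Nonempty X
  case neg =>
    refine ⟨1/2, by norm_num, fun ε hε hε' Ξ hΞ => ?_⟩
    refine Filter.Eventually.of_forall (fun i => ⟨fun _ => 1/2, fun z => by norm_num, ?_⟩)
    rintro S hS ⟨x, hx, -⟩
    exact hX ⟨x ⟨0, hdpos i⟩⟩
  obtain ⟨x₀⟩ := hX
  have hUne : Nonempty ↥U := ⟨⟨(hUcover x₀).choose, (hUcover x₀).choose_spec.1⟩⟩
  set M := Fintype.card ↥U with hMdef
  have hM : 1 ≤ M := Fintype.card_pos
  have hM' : (0:ℝ) < M := by exact_mod_cast hM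
  choose Lf hLfspec using hfLip
  set L : ℝ := 1 + ∑ u : ↥U, |Lf u| with hLdef
  have hL1 : 1 ≤ L := by
    have : 0 ≤ ∑ u : ↥U, |Lf u| := Finset.sum_nonneg fun u _ => abs_nonneg _
    rw [hLdef]; linarith
  have hLpos : 0 < L := by linarith
  have hLf : ∀ (u : ↥U) (x y : X), |f u x - f u y| ≤ L * ρ x y := by
    intro u x y
    refine le_trans (hLfspec u x y) (mul_le_mul_of_nonneg_right ?_ (compat_nonneg hρ x y))
    calc Lf u ≤ |Lf u| := le_abs_self _
      _ ≤ ∑ v : ↥U, |Lf v| := Finset.single_le_sum (f := fun v : ↥U => |Lf v|)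
        (fun v _ => abs_nonneg _) (Finset.mem_univ u)
      _ ≤ L := by rw [hLdef]; linarith
  set θ : ℝ := (α + 3*η/8)/(α + η/2) with hθdef
  have hden : (0:ℝ) < α + η/2 := by linarith
  have hθpos : 0 < θ := div_pos (by linarith) hden
  have hθ1 : θ < 1 := (div_lt_one hden).mpr (by linarith)
  have hθsum : θ * (α + η/2) = α + 3*η/8 := by rw [hθdef]; field_simp
  have hlog8L : 0 < Real.log (8*L) := Real.log_pos (by linarith)
  have hlog2 : 0 < Real.log 2 := Real.log_pos (by norm_num)
  set c₅ : ℝ := 8/η*((M:ℝ)*Real.log 2 + (α+η/2)*Real.log (8*L)) with hc5def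
  set c₂ : ℝ := max (Real.log (8*L)/θ) c₅ with hc2def
  refine ⟨min (min (1/2) ((η/(4*(M:ℝ))) ^ ((1-θ)⁻¹ : ℝ)))
      (min ((1/(16*L)) ^ (θ⁻¹ : ℝ)) (Real.exp (-c₂))), ?_, ?_⟩
  · refine lt_min (lt_min (by norm_num) (Real.rpow_pos_of_pos (by positivity) _))
      (lt_min (Real.rpow_pos_of_pos (by positivity) _) (Real.exp_pos _))
  intro ε hε0 hεε₀ Ξ hlim
  rw [lt_min_iff, lt_min_iff, lt_min_iff] at hεε₀
  obtain ⟨⟨hεhalf, h2'⟩, h3', h4'⟩ := hεε₀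
  have hε1 : ε < 1 := by linarith
  set c : ℝ := Real.log ε⁻¹ with hcdef
  have hclog : Real.log ε = -c := by rw [hcdef, Real.log_inv]; ring
  have hc2lt : c₂ < c := by
    have := Real.log_lt_log hε0 h4'
    rw [Real.log_exp] at this
    rw [hcdef, Real.log_inv]
    linarith
  have hc5pos : 0 < c₅ := by
    rw [hc5def]
    have : 0 < (M:ℝ)*Real.log 2 := by positivity
    have h2 : 0 < (α+η/2)*Real.log (8*L) := by positivity
    positivity
  have hcpos : 0 < c := lt_trans (lt_of_lt_of_le hc5pos (le_max_right _ _)) hc2lt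
  have hθc : Real.log (8*L) < θ * c := by
    have h := lt_of_le_of_lt (le_max_left (Real.log (8*L)/θ) c₅) hc2lt
    rw [div_lt_iff₀ hθpos] at h
    linarith [h]
  have hc5 : (M:ℝ)*Real.log 2 + (α+η/2)*Real.log (8*L) < (η/8)*c := by
    have h := lt_of_le_of_lt (le_max_right (Real.log (8*L)/θ) c₅) hc2lt
    rw [hc5def] at h
    have h2 := mul_lt_mul_of_pos_left h (by positivity : (0:ℝ) < η/8)
    calc (M:ℝ)*Real.log 2 + (α+η/2)*Real.log (8*L)
        = (η/8) * (8/η*((M:ℝ)*Real.log 2 + (α+η/2)*Real.log (8*L))) := by field_simp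
      _ < (η/8)*c := h2
  -- ε^(1-θ) * M < η/4
  have hε1θ : ε ^ ((1-θ) : ℝ) * M < η/4 := by
    have hbase : (0:ℝ) ≤ η/(4*(M:ℝ)) := by positivity
    have h := Real.rpow_lt_rpow (le_of_lt hε0) h2' (by linarith : (0:ℝ) < 1-θ)
    rw [← Real.rpow_mul hbase, inv_mul_cancel₀ (by linarith : (1:ℝ)-θ ≠ 0), Real.rpow_one] at h
    have h2 := mul_lt_mul_of_pos_right h hM'
    calc ε ^ ((1-θ) : ℝ) * M < (η/(4*(M:ℝ))) * M := h2
      _ = η/4 := by field_simp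
  -- L * ε^θ ≤ 1/16
  have hrb : L * ε ^ (θ : ℝ) < 1/16 := by
    have hbase : (0:ℝ) ≤ 1/(16*L) := by positivity
    have h := Real.rpow_lt_rpow (le_of_lt hε0) h3' hθpos
    rw [← Real.rpow_mul hbase, inv_mul_cancel₀ (ne_of_gt hθpos), Real.rpow_one] at h
    have h2 := mul_lt_mul_of_pos_left h hLpos
    calc L * ε ^ (θ:ℝ) < L * (1/(16*L)) := h2
      _ = 1/16 := by field_simp
  set r : ℝ := L * ε ^ (θ:ℝ) with hrdef
  have hεθpos : (0:ℝ) < ε ^ (θ:ℝ) := Real.rpow_pos_of_pos hε0 _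
  have hrpos : 0 < r := by positivity
  set N : ℕ := ⌊(4*r)⁻¹⌋₊ with hNdef
  have h4r : 4*r ≤ 1/4 := by linarith
  have h4rpos : 0 < 4*r := by linarith
  have hN4 : 4 ≤ N := by
    apply Nat.le_floor
    rw [le_inv_comm₀ (by norm_num) h4rpos]
    push_cast
    linarith
  have hNpos : 0 < N := by omega
  have hNposR : (0:ℝ) < N := by exact_mod_cast hNpos
  have hNle : (N:ℝ) ≤ (4*r)⁻¹ := Nat.floor_le (by positivity)
  have h8r : (2:ℝ) ≤ (8*r)⁻¹ := by
    rw [le_inv_comm₀ (by norm_num) (by linarith)]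
    linarith
  have h48 : (4*r)⁻¹ = 2 * (8*r)⁻¹ := by
    field_simp
    ring
  have hNge : (8*r)⁻¹ ≤ (N:ℝ) := by
    have := Nat.sub_one_lt_floor ((4*r)⁻¹)
    rw [← hNdef] at this
    rw [h48] at this
    linarith
  have hsepN : 2 * r < (N:ℝ)⁻¹ := by
    have h1 : (N:ℝ)⁻¹ ≥ ((4*r)⁻¹)⁻¹ := by
      apply inv_anti₀ hNposR hNle
    rw [inv_inv] at h1
    linarith
  obtain ⟨T, hTcard, hTIoo, hTsep⟩ := exists_grid N hNpos
  have hsep' : ∀ a : ℝ, ∀ t ∈ T, ∀ t' ∈ T, |t - a| ≤ r → |t' - a| ≤ r → t = t' :=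
    fun a => hTsep a r hsepN
  set β : ℝ := α + η/4 with hβdef
  have hlim' : Filter.limsup (fun i =>
      elog (covNum (fun x y => pPM ρ 1 x y) (Ξ i) ε)
        * ((((d i : ℝ) * Real.log ε⁻¹)⁻¹ : ℝ) : EReal)) Filter.atTop < ((β : ℝ) : EReal) :=
    lt_of_le_of_lt hlim (EReal.coe_lt_coe_iff.mpr (by rw [hβdef]; linarith))
  have h1 := Filter.eventually_lt_of_limsup_lt hlim'
  filter_upwards [h1] with i hi
  set k : ℕ := d i with hkdef
  have hk : 0 < k := hdpos i
  have hkR : (0:ℝ) < k := by exact_mod_cast hk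
  have hnet := exists_net hρ hε0 k (Ξ i)
  have hne : {n : ℕ | ∃ D : Finset (Fin k → X), ↑D ⊆ Ξ i ∧ D.card = n ∧
      ∀ a ∈ Ξ i, ∃ z ∈ D, pPM ρ 1 a z ≤ ε}.Nonempty := by
    obtain ⟨D, hD1, hD2⟩ := hnet
    exact ⟨D.card, D, hD1, rfl, hD2⟩
  have hcoveq : covNum (fun x y => pPM ρ 1 x y) (Ξ i) ε = sInf {n : ℕ |
      ∃ D : Finset (Fin k → X), ↑D ⊆ Ξ i ∧ D.card = n ∧
        ∀ a ∈ Ξ i, ∃ z ∈ D, pPM ρ 1 a z ≤ ε} := rfl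
  obtain ⟨Dnet, hDsub, hDcard, hDdense⟩ := hcoveq ▸ Nat.sInf_mem hne
  by_cases hn0 : covNum (fun x y => pPM ρ 1 x y) (Ξ i) ε = 0
  · -- Ξ i is empty
    have hDempty : Dnet = ∅ := Finset.card_eq_zero.mp (by rw [hDcard, hn0])
    have hΞempty : Ξ i = ∅ := by
      by_contra hc
      obtain ⟨a, ha⟩ := Set.nonempty_iff_ne_empty.mpr hc
      obtain ⟨z, hz, -⟩ := hDdense a ha
      rw [hDempty] at hz
      exact absurd hz (Finset.notMem_empty z)
    refine ⟨fun _ => 1/2, fun z => by norm_num, ?_⟩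
    rintro S hS ⟨x, hx, -⟩
    rw [hΞempty] at hx
    exact hx
  -- main case
  have hnpos : 0 < covNum (fun x y => pPM ρ 1 x y) (Ξ i) ε := Nat.pos_of_ne_zero hn0
  simp only [elog, if_neg hn0] at hi
  rw [← EReal.coe_mul] at hi
  have hireal : Real.log (covNum (fun x y => pPM ρ 1 x y) (Ξ i) ε)
      * (((k:ℝ) * c)⁻¹) < β := EReal.coe_lt_coe_iff.mp hi
  have hkc : (0:ℝ) < (k:ℝ) * c := by positivity
  have hlogn : Real.log (covNum (fun x y => pPM ρ 1 x y) (Ξ i) ε) < β * ((k:ℝ)*c) := by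
    rw [← div_eq_mul_inv] at hireal
    exact (div_lt_iff₀ hkc).mp hireal
  have hDreal : (Dnet.card : ℝ) < Real.exp (β * ((k:ℝ)*c)) := by
    rw [hDcard]
    have hnR : (0:ℝ) < (covNum (fun x y => pPM ρ 1 x y) (Ξ i) ε : ℝ) := by exact_mod_cast hnpos
    calc ((covNum (fun x y => pPM ρ 1 x y) (Ξ i) ε : ℕ) : ℝ)
        = Real.exp (Real.log (covNum (fun x y => pPM ρ 1 x y) (Ξ i) ε)) := (Real.exp_log hnR).symm
      _ < Real.exp (β * ((k:ℝ)*c)) := Real.exp_lt_exp.mpr hlogn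
  set m : ℕ := ⌈(α+η/2) * (k:ℝ)⌉₊ with hmdef
  have hmge : (α+η/2) * (k:ℝ) ≤ m := Nat.le_ceil _
  have hmlt : (m:ℝ) < (α+η/2) * (k:ℝ) + 1 := Nat.ceil_lt_add_one (by positivity)
  have hcardZ : Fintype.card (Fin k × ↥U) = k * M := by
    rw [Fintype.card_prod, Fintype.card_fin, hMdef]
  set W : Finset ((Fin k × ↥U) → ℝ) :=
    Dnet.image (fun φ => fun z : Fin k × ↥U => f z.2 (φ z.1)) with hWdef
  have hWcard : W.card ≤ Dnet.card := Finset.card_image_le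
  -- the key counting inequality, as naturals
  have hltnat : W.card * (Fintype.card (Fin k × ↥U)).choose m
      * T.card ^ (Fintype.card (Fin k × ↥U) - m) < T.card ^ Fintype.card (Fin k × ↥U) := by
    rw [hcardZ, hTcard]
    rcases le_or_gt m (k*M) with hm | hm
    · -- main case : via reals
      have hb : Real.log ((8*r)⁻¹) = θ * c - Real.log (8*L) := by
        rw [Real.log_inv]
        have : (8:ℝ)*r = (8*L) * ε ^ (θ:ℝ) := by rw [hrdef]; ring
        rw [this, Real.log_mul (by positivity) (ne_of_gt hεθpos), Real.log_rpow hε0, hclog]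
        ring
      have hbpos : 0 < θ * c - Real.log (8*L) := by linarith
      have hNm : Real.exp ((m:ℝ) * (θ * c - Real.log (8*L))) ≤ (N:ℝ)^m := by
        calc Real.exp ((m:ℝ) * (θ * c - Real.log (8*L)))
            = Real.exp (θ * c - Real.log (8*L)) ^ m := Real.exp_nat_mul _ m
          _ = ((8*r)⁻¹) ^ m := by rw [← hb, Real.exp_log (by positivity)]
          _ ≤ (N:ℝ)^m := pow_le_pow_left₀ (by positivity) hNge m
      have h2pow : ((2:ℝ))^(k*M) = Real.exp ((k*M : ℕ) * Real.log 2) := by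
        rw [Real.exp_nat_mul, Real.exp_log (by norm_num)]
      have hkMR : ((k*M : ℕ) : ℝ) = (k:ℝ) * M := by push_cast; ring
      have hexp : Real.exp (β * ((k:ℝ)*c)) * (2:ℝ)^(k*M)
          < Real.exp ((m:ℝ) * (θ * c - Real.log (8*L))) := by
        rw [h2pow, ← Real.exp_add, Real.exp_lt_exp]
        have hmb : ((α+η/2) * (k:ℝ)) * (θ * c - Real.log (8*L))
            ≤ (m:ℝ) * (θ * c - Real.log (8*L)) :=
          mul_le_mul_of_nonneg_right hmge (le_of_lt hbpos)
        have hkey : β * ((k:ℝ)*c) + ((k*M : ℕ) : ℝ) * Real.log 2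
            < ((α+η/2) * (k:ℝ)) * (θ * c - Real.log (8*L)) := by
          rw [hkMR, hβdef]
          have hexpand : ((α+η/2) * (k:ℝ)) * (θ * c - Real.log (8*L))
              = (k:ℝ) * ((α + 3*η/8) * c - (α+η/2) * Real.log (8*L)) := by
            have : (α+η/2) * θ = α + 3*η/8 := by rw [mul_comm]; exact hθsum
            calc ((α+η/2) * (k:ℝ)) * (θ * c - Real.log (8*L))
                = (k:ℝ) * (((α+η/2)*θ) * c - (α+η/2) * Real.log (8*L)) := by ring
              _ = (k:ℝ) * ((α + 3*η/8) * c - (α+η/2) * Real.log (8*L)) := by rw [this]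
          rw [hexpand]
          have hstep : (α + η/4) * c + (M:ℝ) * Real.log 2
              < (α + 3*η/8) * c - (α+η/2) * Real.log (8*L) := by linarith [hc5]
          linarith [mul_lt_mul_of_pos_left hstep hkR]
        exact lt_of_lt_of_le hkey hmb
      have hchoose : (((k*M).choose m : ℕ) : ℝ) ≤ (2:ℝ)^(k*M) := by
        have := nat_choose_le_two_pow (k*M) m
        calc (((k*M).choose m : ℕ) : ℝ) ≤ ((2^(k*M) : ℕ) : ℝ) := by exact_mod_cast this
          _ = (2:ℝ)^(k*M) := by push_cast; ring
      have hreal : (W.card : ℝ) * ((k*M).choose m) * (N:ℝ) ^ (k*M - m) < (N:ℝ) ^ (k*M) := by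
        have hWle : (W.card : ℝ) ≤ Real.exp (β * ((k:ℝ)*c)) := by
          calc (W.card : ℝ) ≤ (Dnet.card : ℝ) := by exact_mod_cast hWcard
            _ ≤ _ := le_of_lt hDreal
        have hs1 : (W.card : ℝ) * ((k*M).choose m)
            ≤ Real.exp (β * ((k:ℝ)*c)) * (2:ℝ)^(k*M) :=
          mul_le_mul hWle hchoose (by positivity) (Real.exp_nonneg _)
        have hs2 : (W.card : ℝ) * ((k*M).choose m) * (N:ℝ) ^ (k*M - m)
            < Real.exp ((m:ℝ) * (θ * c - Real.log (8*L))) * (N:ℝ) ^ (k*M - m) := by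
          apply mul_le_mul_of_nonneg_right hs1 (by positivity) |>.trans_lt
          exact mul_lt_mul_of_pos_right hexp (by positivity)
        calc (W.card : ℝ) * ((k*M).choose m) * (N:ℝ) ^ (k*M - m)
            < Real.exp ((m:ℝ) * (θ * c - Real.log (8*L))) * (N:ℝ) ^ (k*M - m) := hs2
          _ ≤ (N:ℝ)^m * (N:ℝ) ^ (k*M - m) :=
              mul_le_mul_of_nonneg_right hNm (by positivity)
          _ = (N:ℝ)^(k*M) := by rw [← pow_add, Nat.add_sub_cancel' hm]
      exact_mod_cast hreal
    · -- degenerate case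
      rw [Nat.choose_eq_zero_of_lt hm]
      simp only [mul_zero, zero_mul]
      exact pow_pos hNpos _
  obtain ⟨ξ, hξT, hξW⟩ := exists_good_point T r hsep' W m hltnat
  refine ⟨ξ, fun z => hTIoo _ (hξT z), ?_⟩
  rintro S hScard ⟨x, hx, hmatch⟩
  obtain ⟨φ, hφD, hφdist⟩ := hDdense x hx
  set w : (Fin k × ↥U) → ℝ := fun z => f z.2 (φ z.1) with hwdef
  have hwW : w ∈ W := Finset.mem_image.mpr ⟨φ, hφD, rfl⟩
  have hNM : (Finset.univ.filter fun z : Fin k × ↥U => |ξ z - w z| ≤ r).card < m := hξW w hwW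
  set Bcols : Finset (Fin k) := Finset.univ.filter (fun j : Fin k => ε ^ (θ:ℝ) < ρ (x j) (φ j))
    with hBdef
  have hsumρ : ∑ j, ρ (x j) (φ j) ≤ (k:ℝ) * ε := by
    rw [pPM_one'] at hφdist
    have h := mul_le_mul_of_nonneg_left hφdist (le_of_lt hkR)
    calc ∑ j, ρ (x j) (φ j) = (k:ℝ) * ((k:ℝ)⁻¹ * ∑ j, ρ (x j) (φ j)) := by
          field_simp
      _ ≤ (k:ℝ) * ε := h
  have hBc : (Bcols.card:ℝ) * ε ^ (θ:ℝ) ≤ (k:ℝ) * ε := by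
    have h1 : Bcols.card • (ε ^ (θ:ℝ)) ≤ ∑ j ∈ Bcols, ρ (x j) (φ j) :=
      Finset.card_nsmul_le_sum Bcols _ _
        (fun j hj => le_of_lt (Finset.mem_filter.mp hj).2)
    have h2 : ∑ j ∈ Bcols, ρ (x j) (φ j) ≤ ∑ j, ρ (x j) (φ j) :=
      Finset.sum_le_sum_of_subset_of_nonneg (Finset.subset_univ _)
        (fun j _ _ => compat_nonneg hρ _ _)
    rw [nsmul_eq_mul] at h1
    linarith
  have hBcard : (Bcols.card:ℝ) ≤ (k:ℝ) * ε ^ ((1-θ):ℝ) := by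
    have h3 : ε ^ ((1-θ):ℝ) = ε * (ε ^ (θ:ℝ))⁻¹ := by
      rw [show (1:ℝ)-θ = 1 + (-θ) by ring, Real.rpow_add hε0, Real.rpow_one,
        Real.rpow_neg (le_of_lt hε0)]
    rw [h3]
    rw [← mul_assoc]
    rw [← le_div_iff₀ hεθpos] at hBc
    rw [div_eq_mul_inv] at hBc
    exact hBc
  have hEsub : S ⊆ Bcols ×ˢ Finset.univ ∪
      Finset.univ.filter (fun z : Fin k × ↥U => |ξ z - w z| ≤ r) := by
    intro z hz
    by_cases hj : z.1 ∈ Bcols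
    · exact Finset.mem_union.mpr (Or.inl (Finset.mem_product.mpr ⟨hj, Finset.mem_univ _⟩))
    · refine Finset.mem_union.mpr (Or.inr (Finset.mem_filter.mpr ⟨Finset.mem_univ _, ?_⟩))
      have hρle : ρ (x z.1) (φ z.1) ≤ ε ^ (θ:ℝ) := by
        rw [hBdef, Finset.mem_filter, not_and] at hj
        exact not_lt.mp (hj (Finset.mem_univ _))
      have heq : ξ z = f z.2 (x z.1) := (hmatch z hz).symm
      rw [heq, hwdef]
      calc |f z.2 (x z.1) - f z.2 (φ z.1)| ≤ L * ρ (x z.1) (φ z.1) := hLf _ _ _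
        _ ≤ L * ε ^ (θ:ℝ) := mul_le_mul_of_nonneg_left hρle (le_of_lt hLpos)
        _ = r := hrdef.symm
  have hcardle : (S.card : ℝ) ≤ (Bcols.card:ℝ) * (M:ℝ)
      + ((Finset.univ.filter fun z : Fin k × ↥U => |ξ z - w z| ≤ r).card : ℝ) := by
    have h1 : S.card ≤ (Bcols ×ˢ Finset.univ ∪
        Finset.univ.filter (fun z : Fin k × ↥U => |ξ z - w z| ≤ r)).card :=
      Finset.card_le_card hEsub
    have h2 : (Bcols ×ˢ Finset.univ ∪
        Finset.univ.filter (fun z : Fin k × ↥U => |ξ z - w z| ≤ r)).card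
        ≤ Bcols.card * M
          + (Finset.univ.filter (fun z : Fin k × ↥U => |ξ z - w z| ≤ r)).card := by
      refine le_trans (Finset.card_union_le _ _) ?_
      rw [Finset.card_product, Finset.card_univ]
    exact_mod_cast le_trans h1 h2
  have hNM' : ((Finset.univ.filter fun z : Fin k × ↥U => |ξ z - w z| ≤ r).card : ℝ)
      < (α+η/2) * (k:ℝ) := by
    have : ((Finset.univ.filter fun z : Fin k × ↥U => |ξ z - w z| ≤ r).card : ℝ) + 1 ≤ m := by
      exact_mod_cast Nat.succ_le_of_lt hNM
    linarith
  have hBM : (Bcols.card:ℝ) * (M:ℝ) ≤ (η/4) * (k:ℝ) := by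
    calc (Bcols.card:ℝ) * (M:ℝ) ≤ ((k:ℝ) * ε ^ ((1-θ):ℝ)) * M :=
          mul_le_mul_of_nonneg_right hBcard (by positivity)
      _ = (k:ℝ) * (ε ^ ((1-θ):ℝ) * M) := by ring
      _ ≤ (k:ℝ) * (η/4) := mul_le_mul_of_nonneg_left (le_of_lt hε1θ) (le_of_lt hkR)
      _ = (η/4) * (k:ℝ) := by ring
  have hfinal : (α + η) * (k:ℝ) ≤ (S.card : ℝ) := hScard
  linarith [mul_pos (show (0:ℝ) < η/4 by linarith) hkR]
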